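/- For every prime power q and integers ℓ > k ≥ 1, there exists an integer m ≥ ℓ such that, with M = M_{k×m}(F_q) and any R-submodule X ⊆ M with dim X = m − ℓ, the map E' has nontrivial kernel: there exists a nonzero function ξ : S_{=ℓ} → ℚ with E'(ξ)(U) = 0 for every U ∈ S_{<ℓ}. -/

import Mathlib

set_option linter.unusedSectionVars false
set_option maxHeartbeats 1000000

variable (F : Type) [Field F] [Fintype F] (k m : ℕ)

/-- The matrix module `M = M_{k×m}(F)` as a left module over `R = M_{k×k}(F)`
via matrix multiplication. -/
instance matSMul : SMul (Matrix (Fin k) (Fin k) F) (Matrix (Fin k) (Fin m) F) :=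
  ⟨fun A X => A * X⟩

instance matModule : Module (Matrix (Fin k) (Fin k) F) (Matrix (Fin k) (Fin m) F) where
  one_smul X := Matrix.one_mul X
  mul_smul A B X := Matrix.mul_assoc A B X
  smul_zero A := Matrix.mul_zero A
  smul_add A X Y := Matrix.mul_add A X Y
  add_smul A B X := Matrix.add_mul A B X
  zero_smul X := Matrix.zero_mul X

instance matTower :
    IsScalarTower F (Matrix (Fin k) (Fin k) F) (Matrix (Fin k) (Fin m) F) :=
  ⟨fun c A X => Matrix.smul_mul c A X⟩

noncomputable instance :
    Fintype (Submodule (Matrix (Fin k) (Fin k) F) (Matrix (Fin k) (Fin m) F)) :=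
  Fintype.ofFinite _

/-- The dimension of an `R`-submodule `U ⊆ M`, i.e. `dim_{F_q}(U) / k`. -/
noncomputable def dimk
    (U : Submodule (Matrix (Fin k) (Fin k) F) (Matrix (Fin k) (Fin m) F)) : ℕ :=
  Module.finrank F (U.restrictScalars F) / k

open Classical in
/-- `η_V(U) = (−1)^(dim V − dim U) · q^(binom(dim V − dim U, 2))` if `U ⊆ V`, else `0`. -/
noncomputable def etaV
    (V U : Submodule (Matrix (Fin k) (Fin k) F) (Matrix (Fin k) (Fin m) F)) : ℚ :=
  if U ≤ V then
    (-1 : ℚ) ^ (dimk F k m V - dimk F k m U) *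
      (Fintype.card F : ℚ) ^ ((dimk F k m V - dimk F k m U).choose 2)
  else 0

/-! ### Auxiliary: Morita correspondence between `R`-submodules of `M_{k×m}(F)`
and `F`-subspaces of `F^m`. -/

section AuxDefs

lemma matsmul_eq (B : Matrix (Fin k) (Fin k) F) (A : Matrix (Fin k) (Fin m) F) :
    B • A = B * A := rfl

/-- The `R`-submodule of matrices all of whose rows lie in `W`. -/
def rowMod (W : Submodule F (Fin m → F)) :
    Submodule (Matrix (Fin k) (Fin k) F) (Matrix (Fin k) (Fin m) F) where
  carrier := {A | ∀ i, A i ∈ W}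
  add_mem' := fun hA hB i => W.add_mem (hA i) (hB i)
  zero_mem' := fun _ => W.zero_mem
  smul_mem' := fun B A hA => by
    intro i
    have h : (B • A) i = ∑ j, B i j • A j := by
      funext jj
      rw [matsmul_eq]
      simp [Matrix.mul_apply, Finset.sum_apply]
    rw [h]
    exact Submodule.sum_mem _ fun j _ => W.smul_mem _ (hA j)

@[simp] lemma mem_rowMod {W : Submodule F (Fin m → F)}
    {A : Matrix (Fin k) (Fin m) F} : A ∈ rowMod F k m W ↔ ∀ i, A i ∈ W := Iff.rfl

lemma rowMod_inf (W₁ W₂ : Submodule F (Fin m → F)) :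
    rowMod F k m (W₁ ⊓ W₂) = rowMod F k m W₁ ⊓ rowMod F k m W₂ := by
  ext A
  simp [Submodule.mem_inf, forall_and]

lemma rowMod_bot : rowMod F k m (⊥ : Submodule F (Fin m → F)) = ⊥ := by
  ext A
  simp only [mem_rowMod, Submodule.mem_bot]
  constructor
  · intro h; funext i j; exact congrFun (h i) j
  · rintro rfl i; rfl

/-- The matrix with `w` in row `r` and zeros elsewhere. -/
def singleRow (r : Fin k) (w : Fin m → F) : Matrix (Fin k) (Fin m) F :=
  Matrix.of fun i j => if i = r then w j else 0

lemma singleRow_apply (r i : Fin k) (w : Fin m → F) :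
    singleRow F k m r w i = if i = r then w else 0 := by
  funext j
  by_cases h : i = r <;> simp [singleRow, h]

lemma fsmul_mem {U : Submodule (Matrix (Fin k) (Fin k) F) (Matrix (Fin k) (Fin m) F)}
    (c : F) {A : Matrix (Fin k) (Fin m) F} (hA : A ∈ U) : c • A ∈ U := by
  have h : c • A = (c • (1 : Matrix (Fin k) (Fin k) F)) • A := by
    rw [smul_assoc, one_smul]
  rw [h]
  exact U.smul_mem _ hA

lemma singleRow_mem {U : Submodule (Matrix (Fin k) (Fin k) F) (Matrix (Fin k) (Fin m) F)}
    {A : Matrix (Fin k) (Fin m) F} (hA : A ∈ U) (r i₀ : Fin k) :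
    singleRow F k m r (A i₀) ∈ U := by
  have h : singleRow F k m r (A i₀) = (Matrix.single r i₀ (1 : F)) • A := by
    rw [matsmul_eq]
    ext i j
    rw [Matrix.mul_apply]
    simp [singleRow, Matrix.single, ite_and, eq_comm]
  rw [h]
  exact U.smul_mem _ hA

/-- The span of all rows of matrices in an `R`-submodule. -/
def rowSpan (U : Submodule (Matrix (Fin k) (Fin k) F) (Matrix (Fin k) (Fin m) F)) :
    Submodule F (Fin m → F) :=
  Submodule.span F {w | ∃ A ∈ U, ∃ i, A i = w}

lemma singleRow_mem_of_mem_rowSpan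
    {U : Submodule (Matrix (Fin k) (Fin k) F) (Matrix (Fin k) (Fin m) F)}
    {w : Fin m → F} (hw : w ∈ rowSpan F k m U) (r : Fin k) :
    singleRow F k m r w ∈ U := by
  induction hw using Submodule.span_induction with
  | mem x hx =>
      obtain ⟨A, hA, i₀, rfl⟩ := hx
      exact singleRow_mem F k m hA r i₀
  | zero =>
      have h : singleRow F k m r (0 : Fin m → F) = 0 := by
        ext i j; simp [singleRow]
      rw [h]; exact U.zero_mem
  | add x y _ _ hx hy =>
      have h : singleRow F k m r (x + y) = singleRow F k m r x + singleRow F k m r y := by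
        ext i j; by_cases h : i = r <;> simp [singleRow, h]
      rw [h]; exact U.add_mem hx hy
  | smul c x _ hx =>
      have h : singleRow F k m r (c • x) = c • singleRow F k m r x := by
        ext i j; by_cases h : i = r <;> simp [singleRow, h]
      rw [h]; exact fsmul_mem F k m c hx

lemma rowMod_rowSpan (U : Submodule (Matrix (Fin k) (Fin k) F) (Matrix (Fin k) (Fin m) F)) :
    rowMod F k m (rowSpan F k m U) = U := by
  apply le_antisymm
  · intro A hA
    have hrep : A = ∑ r, singleRow F k m r (A r) := by
      ext i j
      rw [Matrix.sum_apply]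
      simp [singleRow]
    rw [hrep]
    exact Submodule.sum_mem U fun r _ => singleRow_mem_of_mem_rowSpan F k m (hA r) r
  · intro A hA i
    exact Submodule.subset_span ⟨A, hA, i, rfl⟩

lemma rowSpan_rowMod (hk : 0 < k) (W : Submodule F (Fin m → F)) :
    rowSpan F k m (rowMod F k m W) = W := by
  apply le_antisymm
  · rw [rowSpan, Submodule.span_le]
    rintro w ⟨A, hA, i, rfl⟩
    exact hA i
  · intro w hw
    refine Submodule.subset_span ⟨singleRow F k m ⟨0, hk⟩ w, ?_, ⟨0, hk⟩, ?_⟩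
    · intro i
      rw [singleRow_apply]
      split
      · exact hw
      · exact W.zero_mem
    · rw [singleRow_apply]
      simp

lemma rowMod_injective (hk : 0 < k) : Function.Injective (rowMod F k m) := by
  intro W₁ W₂ h
  rw [← rowSpan_rowMod F k m hk W₁, h, rowSpan_rowMod F k m hk W₂]

/-- `rowMod W` is `F`-linearly equivalent to `k` copies of `W`. -/
noncomputable def rowModEquiv (W : Submodule F (Fin m → F)) :
    ((rowMod F k m W).restrictScalars F) ≃ₗ[F] (Fin k → W) where
  toFun A := fun i => ⟨A.1 i, A.2 i⟩
  map_add' A B := by funext i; ext j; rfl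
  map_smul' c A := by funext i; ext j; rfl
  invFun f := ⟨Matrix.of (fun i => (f i : Fin m → F)), fun i => (f i).2⟩
  left_inv A := rfl
  right_inv f := rfl

lemma finrank_rowMod (W : Submodule F (Fin m → F)) :
    Module.finrank F ((rowMod F k m W).restrictScalars F) = k * Module.finrank F W := by
  rw [LinearEquiv.finrank_eq (rowModEquiv F k m W), Module.finrank_pi_fintype,
    Finset.sum_const, Finset.card_univ, Fintype.card_fin, smul_eq_mul]

lemma dimk_rowMod (hk : 0 < k) (W : Submodule F (Fin m → F)) :
    dimk F k m (rowMod F k m W) = Module.finrank F W := by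
  rw [dimk, finrank_rowMod]
  exact Nat.mul_div_cancel_left _ hk

/-- Complements of `Y` in bijection with linear maps `V₀ →ₗ Y`, given one complement `V₀`. -/
noncomputable def complEquivHom {E : Type*} [AddCommGroup E] [Module F E]
    {Y V₀ : Submodule F E} (h : IsCompl Y V₀) :
    { f : E →ₗ[F] Y // ∀ x : Y, f x = x } ≃ (V₀ →ₗ[F] Y) where
  toFun f := f.1 ∘ₗ V₀.subtype
  invFun g :=
    ⟨Y.projectionOnto V₀ h + g ∘ₗ V₀.projectionOnto Y h.symm, by
      intro x
      simp [Submodule.projectionOnto_apply_left h x,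
        Submodule.projectionOnto_apply_of_mem_right h.symm x.2]⟩
  left_inv f := by
    apply Subtype.ext
    apply LinearMap.ext
    intro x
    have hx := Submodule.projection_add_projection_eq_self h x
    conv_rhs => rw [← hx]
    rw [map_add, Submodule.projection_apply, Submodule.projection_apply]
    simp [f.2, -Submodule.coe_projectionOnto_apply]
  right_inv g := by
    apply LinearMap.ext
    intro v
    simp [Submodule.projectionOnto_apply_of_mem_right h v.2,
      Submodule.projectionOnto_apply_left h.symm v]

lemma exists_span_tuple (d : ℕ) (W : Submodule F (Fin m → F))
    (h : Module.finrank F W ≤ d) :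
    ∃ v : Fin d → (Fin m → F), Submodule.span F (Set.range v) = W := by
  let b := Module.finBasis F W
  refine ⟨fun i => if h' : (i : ℕ) < Module.finrank F W then (b ⟨i, h'⟩ : Fin m → F) else 0,
    le_antisymm ?_ ?_⟩
  · rw [Submodule.span_le]
    rintro w ⟨i, rfl⟩
    dsimp only
    split
    · exact (b _).2
    · exact W.zero_mem
  · intro w hw
    have hspan : (⟨w, hw⟩ : W) ∈ Submodule.span F (Set.range b) := by
      rw [b.span_eq]; trivial
    have hmap := Submodule.mem_map_of_mem (f := W.subtype) hspan
    rw [Submodule.map_span] at hmap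
    refine Submodule.span_mono ?_ (by simpa using hmap)
    rintro x ⟨-, ⟨j, rfl⟩, rfl⟩
    refine ⟨⟨(j : ℕ), lt_of_lt_of_le j.2 h⟩, ?_⟩
    simp [j.2]

lemma exists_kernel_vec {α β : Type} [Fintype α] [Fintype β] (η : α → β → ℚ)
    (hcard : Fintype.card β < Fintype.card α) :
    ∃ ξ : α → ℚ, ξ ≠ 0 ∧ ∀ b, ∑ a, ξ a * η a b = 0 := by
  let T : (α → ℚ) →ₗ[ℚ] (β → ℚ) :=
    { toFun := fun ξ b => ∑ a, ξ a * η a b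
      map_add' := fun ξ ζ => by
        funext b
        simp [add_mul, Finset.sum_add_distrib]
      map_smul' := fun c ξ => by
        funext b
        simp [Finset.mul_sum, mul_assoc] }
  have hni : ¬ Function.Injective T := by
    intro hinj
    have hle := LinearMap.finrank_le_finrank_of_injective hinj
    rw [Module.finrank_pi, Module.finrank_pi] at hle
    omega
  have hker : LinearMap.ker T ≠ ⊥ := fun hbot => hni (LinearMap.ker_eq_bot.mp hbot)
  obtain ⟨ξ, hmem, hne⟩ := Submodule.exists_mem_ne_zero_of_ne_bot hker
  exact ⟨ξ, hne, fun b => congrFun (LinearMap.mem_ker.mp hmem) b⟩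

open Classical in
lemma main_aux (hk : 0 < k) (l : ℕ) (hml : l ≤ m)
    (hexp : m * (l - 1) < l * (m - l)) :
    ∀ X : Submodule (Matrix (Fin k) (Fin k) F) (Matrix (Fin k) (Fin m) F),
      dimk F k m X = m - l →
      ∃ ξ : {V : Submodule (Matrix (Fin k) (Fin k) F) (Matrix (Fin k) (Fin m) F) //
               dimk F k m V = l ∧ V ⊓ X = ⊥} → ℚ,
        ξ ≠ 0 ∧
        ∀ U : Submodule (Matrix (Fin k) (Fin k) F) (Matrix (Fin k) (Fin m) F),
          dimk F k m U < l → U ⊓ X = ⊥ →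
          ∑ V : {V : Submodule (Matrix (Fin k) (Fin k) F) (Matrix (Fin k) (Fin m) F) //
                   dimk F k m V = l ∧ V ⊓ X = ⊥},
            ξ V * etaV F k m (V : Submodule (Matrix (Fin k) (Fin k) F) (Matrix (Fin k) (Fin m) F)) U = 0 := by
  classical
  intro X hX
  set Q := Fintype.card F with hQdef
  have hQ : 1 < Q := Fintype.one_lt_card
  -- the subspace corresponding to X
  set Wx := rowSpan F k m X with hWxdef
  have hWx : rowMod F k m Wx = X := rowMod_rowSpan F k m X
  have hdimWx : Module.finrank F Wx = m - l := by
    have h1 := dimk_rowMod F k m hk Wx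
    rw [hWx] at h1
    omega
  obtain ⟨V₀, hV₀⟩ := Submodule.exists_isCompl Wx
  have hfr : Module.finrank F (Fin m → F) = m := by
    simp [Module.finrank_pi]
  have hsum := Submodule.finrank_add_eq_of_isCompl hV₀
  rw [hfr] at hsum
  have hdimV₀ : Module.finrank F V₀ = l := by omega
  -- lower bound on the number of `V`'s
  have hcardα : Q ^ (l * (m - l)) ≤
      Nat.card {V : Submodule (Matrix (Fin k) (Fin k) F) (Matrix (Fin k) (Fin m) F) //
        dimk F k m V = l ∧ V ⊓ X = ⊥} := by
    have hfin : Finite (V₀ →ₗ[F] Wx) :=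
      Finite.of_injective _ DFunLike.coe_injective
    have e1 : Nat.card {q // IsCompl Wx q} = Q ^ (l * (m - l)) := by
      rw [Nat.card_congr ((Submodule.isComplEquivProj Wx).trans (complEquivHom F hV₀))]
      letI : Fintype (V₀ →ₗ[F] Wx) := Fintype.ofFinite _
      rw [Nat.card_eq_fintype_card, Module.card_eq_pow_finrank (K := F), Module.finrank_linearMap,
        hdimV₀, hdimWx]
    rw [← e1]
    have hinj : Function.Injective
        (fun q : {q // IsCompl Wx q} =>
          (⟨rowMod F k m q.1, by
              rw [dimk_rowMod F k m hk]
              have h2 := Submodule.finrank_add_eq_of_isCompl q.2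
              rw [hfr] at h2
              omega, by
              rw [← hWx, ← rowMod_inf, (Disjoint.eq_bot (disjoint_comm.mp q.2.disjoint)),
                rowMod_bot]⟩ :
            {V : Submodule (Matrix (Fin k) (Fin k) F) (Matrix (Fin k) (Fin m) F) //
              dimk F k m V = l ∧ V ⊓ X = ⊥})) := by
      intro q q' h
      have hval := congrArg Subtype.val h
      exact Subtype.ext (rowMod_injective F k m hk hval)
    exact Nat.card_le_card_of_injective _ hinj
  -- upper bound on the number of `U`'s
  have hcardβ :
      Nat.card {U : Submodule (Matrix (Fin k) (Fin k) F) (Matrix (Fin k) (Fin m) F) //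
        dimk F k m U < l ∧ U ⊓ X = ⊥} ≤ Q ^ (m * (l - 1)) := by
    have hex : ∀ U : {U : Submodule (Matrix (Fin k) (Fin k) F) (Matrix (Fin k) (Fin m) F) //
        dimk F k m U < l ∧ U ⊓ X = ⊥},
        ∃ v : Fin (l - 1) → (Fin m → F),
          rowMod F k m (Submodule.span F (Set.range v)) = U.1 := by
      intro U
      have h1 : rowMod F k m (rowSpan F k m U.1) = U.1 := rowMod_rowSpan F k m U.1
      have h2 : dimk F k m U.1 = Module.finrank F (rowSpan F k m U.1) := by
        conv_lhs => rw [← h1]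
        exact dimk_rowMod F k m hk _
      have h3 : Module.finrank F (rowSpan F k m U.1) ≤ l - 1 := by
        have h4 := U.2.1
        omega
      obtain ⟨v, hv⟩ := exists_span_tuple F m (l - 1) (rowSpan F k m U.1) h3
      exact ⟨v, by rw [hv, h1]⟩
    choose f hf using hex
    have hfinj : Function.Injective f := by
      intro U U' h
      apply Subtype.ext
      rw [← hf U, h, hf U']
    calc Nat.card {U : Submodule (Matrix (Fin k) (Fin k) F) (Matrix (Fin k) (Fin m) F) //
          dimk F k m U < l ∧ U ⊓ X = ⊥}
        ≤ Nat.card (Fin (l - 1) → (Fin m → F)) := Nat.card_le_card_of_injective f hfinj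
      _ = Q ^ (m * (l - 1)) := by
          rw [Nat.card_eq_fintype_card]
          simp [Fintype.card_fun, ← pow_mul, mul_comm, hQdef]
  have hlt :
      Fintype.card {U : Submodule (Matrix (Fin k) (Fin k) F) (Matrix (Fin k) (Fin m) F) //
        dimk F k m U < l ∧ U ⊓ X = ⊥} <
      Fintype.card {V : Submodule (Matrix (Fin k) (Fin k) F) (Matrix (Fin k) (Fin m) F) //
        dimk F k m V = l ∧ V ⊓ X = ⊥} := by
    rw [← Nat.card_eq_fintype_card, ← Nat.card_eq_fintype_card]
    exact lt_of_le_of_lt hcardβ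
      (lt_of_lt_of_le (Nat.pow_lt_pow_right hQ hexp) hcardα)
  obtain ⟨ξ, hne, hker⟩ := exists_kernel_vec (fun V U => etaV F k m V.1 U.1) hlt
  exact ⟨ξ, hne, fun U hU1 hU2 => hker ⟨U, hU1, hU2⟩⟩

end AuxDefs

open Classical in
/-- For `ℓ > k ≥ 1` there exists `m ≥ ℓ` such that, for `M = M_{k×m}(F_q)` and any
`R`-submodule `X ⊆ M` with `dim X = m − ℓ`, the map `E'` has a nontrivial kernel:
some nonzero `ξ : S_{=ℓ} → ℚ` satisfies `∑_{V ∈ S_{=ℓ}} ξ(V) η_V(U) = 0` for every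
`U ∈ S_{<ℓ}`. -/
theorem exists_m_ker_E'_nontrivial (hk : 0 < k) (l : ℕ) (hl : l > k) :
    ∃ m : ℕ, m ≥ l ∧
      ∀ X : Submodule (Matrix (Fin k) (Fin k) F) (Matrix (Fin k) (Fin m) F),
        dimk F k m X = m - l →
        ∃ ξ : {V : Submodule (Matrix (Fin k) (Fin k) F) (Matrix (Fin k) (Fin m) F) //
                 dimk F k m V = l ∧ V ⊓ X = ⊥} → ℚ,
          ξ ≠ 0 ∧
          ∀ U : Submodule (Matrix (Fin k) (Fin k) F) (Matrix (Fin k) (Fin m) F),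
            dimk F k m U < l → U ⊓ X = ⊥ →
            ∑ V : {V : Submodule (Matrix (Fin k) (Fin k) F) (Matrix (Fin k) (Fin m) F) //
                     dimk F k m V = l ∧ V ⊓ X = ⊥},
              ξ V * etaV F k m (V : Submodule (Matrix (Fin k) (Fin k) F) (Matrix (Fin k) (Fin m) F)) U = 0 := by
  have hml : l ≤ l * l + 1 := by nlinarith
  have hexp : (l * l + 1) * (l - 1) < l * ((l * l + 1) - l) := by
    obtain ⟨n, rfl⟩ : ∃ n, l = n + 1 := ⟨l - 1, by omega⟩
    have e1 : (n + 1) * (n + 1) + 1 = (n * n + n + 1) + (n + 1) := by ring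
    rw [e1]
    simp only [Nat.add_sub_cancel]
    nlinarith
  exact ⟨l * l + 1, hml, main_aux F k (l * l + 1) hk l hml hexp⟩
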